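/- For every integer s ≥ 1 and every positive integer l satisfying C(l,3) ≥ s+3 and l ≤ s+3, there exists an (N, s+3, 2s+1)-suitable core with N = (s+3)(s−1) + l. -/

import Mathlib

def IsSuitableCore (N w t : ℕ) (C : Fin N → Equiv.Perm (Fin w)) : Prop :=
  ∀ (σ : Fin w) (T : Finset (Fin w)), σ ∉ T → T.card < t →
    t - T.card ≤ (Finset.univ.filter fun i : Fin N =>
      ∀ τ ∈ T, (C i).symm σ < (C i).symm τ).card

def SuitableCoreExists (N w t : ℕ) : Prop :=
  ∃ C : Fin N → Equiv.Perm (Fin w), IsSuitableCore N w t C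

namespace SC8
open Finset
open scoped Classical

variable (s l : ℕ)

/-- consecutive (cyclic) triples in `ZMod l`. -/
def IsConsec (X : Finset (ZMod l)) : Prop := ∃ c : ZMod l, X = {c, c + 1, c + 2}

noncomputable def allowedSets (h4 : 4 ≤ l) : Finset (Finset (ZMod l)) :=
  haveI : NeZero l := ⟨by omega⟩
  (Finset.univ.powersetCard 3).filter (fun X => ¬ IsConsec l X)

lemma allowed_card (h4 : 4 ≤ l) : l.choose 3 ≤ (allowedSets l h4).card + l := by
  haveI : NeZero l := ⟨by omega⟩
  have h1 : ((Finset.univ : Finset (ZMod l)).powersetCard 3).card = l.choose 3 := by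
    rw [Finset.card_powersetCard, Finset.card_univ, ZMod.card]
  have h2 : (((Finset.univ : Finset (ZMod l)).powersetCard 3).filter (fun X => IsConsec l X)).card ≤ l := by
    have hsub : ((Finset.univ : Finset (ZMod l)).powersetCard 3).filter (fun X => IsConsec l X) ⊆
        (Finset.univ : Finset (ZMod l)).image (fun c => {c, c + 1, c + 2}) := by
      intro X hX
      rw [mem_filter] at hX
      obtain ⟨c, hc⟩ := hX.2
      exact mem_image.2 ⟨c, mem_univ c, hc.symm⟩
    calc _ ≤ ((Finset.univ : Finset (ZMod l)).image (fun c => {c, c + 1, c + 2})).card :=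
            card_le_card hsub
      _ ≤ (Finset.univ : Finset (ZMod l)).card := card_image_le
      _ = l := by rw [Finset.card_univ, ZMod.card]
  have h3 := Finset.card_filter_add_card_filter_not
    (s := (Finset.univ : Finset (ZMod l)).powersetCard 3) (p := fun X => IsConsec l X)
  have : (allowedSets l h4).card = (((Finset.univ : Finset (ZMod l)).powersetCard 3).filter
      (fun X => ¬ IsConsec l X)).card := rfl
  omega

noncomputable def allowedList (h4 : 4 ≤ l) : List (Finset (ZMod l)) := (allowedSets l h4).toList

lemma allowedList_length (h4 : 4 ≤ l) : (allowedList l h4).length = (allowedSets l h4).card :=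
  Finset.length_toList _

/-- the symbol-index map from `ZMod l` into `Fin (s+3)`. -/
def toW (h4 : 4 ≤ l) (hlw : l ≤ s + 3) (z : ZMod l) : Fin (s + 3) :=
  haveI : NeZero l := ⟨by omega⟩
  ⟨z.val, by have := ZMod.val_lt z; omega⟩

lemma toW_inj (h4 : 4 ≤ l) (hlw : l ≤ s + 3) : Function.Injective (toW s l h4 hlw) := by
  haveI : NeZero l := ⟨by omega⟩
  intro x y h
  have : x.val = y.val := congrArg Fin.val h
  exact ZMod.val_injective l this

lemma toW_val (h4 : 4 ≤ l) (hlw : l ≤ s + 3) (z : ZMod l) :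
    ((toW s l h4 hlw z : Fin (s+3)) : ℕ) = z.val := rfl

lemma toW_lt (h4 : 4 ≤ l) (hlw : l ≤ s + 3) (z : ZMod l) :
    ((toW s l h4 hlw z : Fin (s+3)) : ℕ) < l := by
  haveI : NeZero l := ⟨by omega⟩
  have := ZMod.val_lt z; simpa [toW_val] using this

/-- The "ownership" sets: for `x` among the first `l` symbols, the cyclic pair
`{x+1, x+2}`, otherwise a distinct non-consecutive 3-subset. -/
noncomputable def Sl (h4 : 4 ≤ l) (h13 : s + 3 ≤ l.choose 3) (x : Fin (s + 3)) :
    Finset (ZMod l) :=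
  if h : (x : ℕ) < l then {((x : ℕ) : ZMod l) + 1, ((x : ℕ) : ZMod l) + 2}
  else (allowedList l h4).get ⟨(x : ℕ) - l, by
    have hc := allowed_card l h4
    have hx := x.isLt
    rw [allowedList_length]
    omega⟩

variable (h4 : 4 ≤ l) (hlw : l ≤ s + 3) (h13 : s + 3 ≤ l.choose 3)

lemma Sl_of_lt (x : Fin (s + 3)) (hx : (x : ℕ) < l) :
    Sl s l h4 h13 x = {((x : ℕ) : ZMod l) + 1, ((x : ℕ) : ZMod l) + 2} := by
  rw [Sl, dif_pos hx]

lemma Sl_mem_allowed (x : Fin (s + 3)) (hx : ¬ (x : ℕ) < l) :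
    Sl s l h4 h13 x ∈ allowedSets l h4 := by
  rw [Sl, dif_neg hx]
  have : ∀ i (h : i < (allowedList l h4).length), (allowedList l h4).get ⟨i, h⟩ ∈ allowedSets l h4 := by
    intro i h
    have := List.get_mem (allowedList l h4) ⟨i, h⟩
    exact Finset.mem_toList.1 this
  exact this _ _

lemma Sl_card_of_not_lt (x : Fin (s + 3)) (hx : ¬ (x : ℕ) < l) :
    (Sl s l h4 h13 x).card = 3 := by
  have h := Sl_mem_allowed s l h4 h13 x hx
  rw [allowedSets] at h
  have h2 := (Finset.mem_filter.1 h).1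
  exact (Finset.mem_powersetCard.1 h2).2

lemma Sl_not_consec (x : Fin (s + 3)) (hx : ¬ (x : ℕ) < l) :
    ¬ IsConsec l (Sl s l h4 h13 x) := by
  have h := Sl_mem_allowed s l h4 h13 x hx
  rw [allowedSets] at h
  exact (Finset.mem_filter.1 h).2

lemma Sl_inj_of_not_lt (x y : Fin (s + 3)) (hx : ¬ (x : ℕ) < l) (hy : ¬ (y : ℕ) < l)
    (h : Sl s l h4 h13 x = Sl s l h4 h13 y) : x = y := by
  rw [Sl, dif_neg hx, Sl, dif_neg hy] at h
  have hnd : (allowedList l h4).Nodup := Finset.nodup_toList _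
  have := (List.Nodup.get_inj_iff hnd).1 h
  have hxy : (x : ℕ) - l = (y : ℕ) - l := congrArg Fin.val this
  have := x.isLt; have := y.isLt
  exact Fin.ext (by omega)
-- ============ Part 2 : Sw and basic facts ============

lemma natCast_inj_small (hl4 : 4 ≤ l) (i j : ℕ) (hi : i < l) (hj : j < l)
    (h : (i : ZMod l) = (j : ZMod l)) : i = j := by
  haveI : NeZero l := ⟨by omega⟩
  have := congrArg ZMod.val h
  rwa [ZMod.val_natCast_of_lt hi, ZMod.val_natCast_of_lt hj] at this

lemma add_natCast_inj (hl4 : 4 ≤ l) (α : ZMod l) (i j : ℕ) (hi : i < l) (hj : j < l)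
    (h : α + (i : ZMod l) = α + (j : ZMod l)) : i = j :=
  natCast_inj_small l hl4 i j hi hj (add_left_cancel h)

lemma add_natCast_ne_self (hl4 : 4 ≤ l) (α : ZMod l) (i : ℕ) (hi : 0 < i) (hil : i < l) :
    α + (i : ZMod l) ≠ α := by
  intro h
  have h0 : α + (i : ZMod l) = α + ((0 : ℕ) : ZMod l) := by simpa using h
  have := add_natCast_inj l hl4 α i 0 hil (by omega) h0
  omega

lemma triple_card (hl4 : 4 ≤ l) (β : ZMod l) :
    ({β + (1:ℕ), β + (2:ℕ), β} : Finset (ZMod l)).card = 3 := by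
  rw [card_insert_of_notMem, card_insert_of_notMem, card_singleton]
  · simp only [mem_singleton]
    exact add_natCast_ne_self l hl4 β 2 (by omega) (by omega)
  · simp only [mem_insert, mem_singleton]
    push_neg
    constructor
    · intro h; have := add_natCast_inj l hl4 β 1 2 (by omega) (by omega) h; omega
    · exact add_natCast_ne_self l hl4 β 1 (by omega) (by omega)

lemma Sl_of_lt' (x : Fin (s + 3)) (hx : (x : ℕ) < l) :
    Sl s l h4 h13 x = {((x : ℕ) : ZMod l) + (1:ℕ), ((x : ℕ) : ZMod l) + (2:ℕ)} := by
  rw [Sl_of_lt s l h4 h13 x hx]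
  norm_num

lemma Sl_card_of_lt (x : Fin (s + 3)) (hx : (x : ℕ) < l) :
    (Sl s l h4 h13 x).card = 2 := by
  rw [Sl_of_lt' s l h4 h13 x hx]
  rw [card_insert_of_notMem, card_singleton]
  simp only [mem_singleton]
  intro h; have := add_natCast_inj l h4 _ 1 2 (by omega) (by omega) h; omega

noncomputable def Sw (x : Fin (s + 3)) : Finset (Fin (s + 3)) :=
  (Sl s l h4 h13 x).image (toW s l h4 hlw)

lemma Sw_card (x : Fin (s + 3)) :
    (Sw s l h4 hlw h13 x).card = (Sl s l h4 h13 x).card :=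
  card_image_of_injective _ (toW_inj s l h4 hlw)

lemma mem_Sw {y x : Fin (s + 3)} :
    y ∈ Sw s l h4 hlw h13 x ↔ ∃ z ∈ Sl s l h4 h13 x, toW s l h4 hlw z = y := by
  rw [Sw, mem_image]

lemma toW_mem_Sw {z : ZMod l} {x : Fin (s + 3)} :
    toW s l h4 hlw z ∈ Sw s l h4 hlw h13 x ↔ z ∈ Sl s l h4 h13 x := by
  rw [mem_Sw]
  constructor
  · rintro ⟨z', hz', he⟩
    rwa [← toW_inj s l h4 hlw he]
  · intro h; exact ⟨z, h, rfl⟩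

lemma mem_Sw_lt {y x : Fin (s + 3)} (h : y ∈ Sw s l h4 hlw h13 x) : (y : ℕ) < l := by
  obtain ⟨z, _, hz⟩ := (mem_Sw s l h4 hlw h13).1 h
  rw [← hz]
  exact toW_lt s l h4 hlw z

lemma toW_natCast_val (x : Fin (s + 3)) (hx : (x : ℕ) < l) :
    toW s l h4 hlw (((x : ℕ) : ZMod l)) = x := by
  haveI : NeZero l := ⟨by omega⟩
  apply Fin.ext
  rw [toW_val]
  exact ZMod.val_natCast_of_lt hx

lemma Sw_subset_imp {a b : Fin (s + 3)} (h : Sw s l h4 hlw h13 a ⊆ Sw s l h4 hlw h13 b) :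
    Sl s l h4 h13 a ⊆ Sl s l h4 h13 b := by
  intro z hz
  have := h ((toW_mem_Sw s l h4 hlw h13).2 hz)
  exact (toW_mem_Sw s l h4 hlw h13).1 this

lemma ne_of_mem_Sw {y x : Fin (s + 3)} (h : y ∈ Sw s l h4 hlw h13 x) : y ≠ x := by
  by_cases hx : (x : ℕ) < l
  · obtain ⟨z, hz, he⟩ := (mem_Sw s l h4 hlw h13).1 h
    rw [Sl_of_lt' s l h4 h13 x hx, mem_insert, mem_singleton] at hz
    intro hyx
    have hx' : toW s l h4 hlw (((x : ℕ) : ZMod l)) = x := toW_natCast_val s l h4 hlw x hx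
    have hzz : z = ((x : ℕ) : ZMod l) := toW_inj s l h4 hlw (by rw [he, hyx, hx'])
    rw [hzz] at hz
    rcases hz with hz | hz
    · exact add_natCast_ne_self l h4 _ 1 (by omega) (by omega) hz.symm
    · exact add_natCast_ne_self l h4 _ 2 (by omega) (by omega) hz.symm
  · intro hyx
    have := mem_Sw_lt s l h4 hlw h13 h
    omega

lemma mem_Sw_iff_lt {y x : Fin (s + 3)} (hy : (y : ℕ) < l) :
    y ∈ Sw s l h4 hlw h13 x ↔ (((y : ℕ) : ZMod l)) ∈ Sl s l h4 h13 x := by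
  rw [← toW_mem_Sw s l h4 hlw h13 (z := ((y : ℕ) : ZMod l)) (x := x),
    toW_natCast_val s l h4 hlw y hy]

lemma mem_Sl_pair {z : ZMod l} {x : Fin (s + 3)} (hx : (x : ℕ) < l) :
    z ∈ Sl s l h4 h13 x ↔
      (z = ((x : ℕ) : ZMod l) + (1:ℕ) ∨ z = ((x : ℕ) : ZMod l) + (2:ℕ)) := by
  rw [Sl_of_lt' s l h4 h13 x hx, mem_insert, mem_singleton]

lemma consec_contra (x : Fin (s + 3)) (hx : ¬ (x : ℕ) < l) (β : ZMod l)
    (hm0 : β ∈ Sl s l h4 h13 x) (hm1 : β + ((1:ℕ) : ZMod l) ∈ Sl s l h4 h13 x)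
    (hm2 : β + ((2:ℕ) : ZMod l) ∈ Sl s l h4 h13 x) : False := by
  have hcard := Sl_card_of_not_lt s l h4 h13 x hx
  have hsub : ({β + (1:ℕ), β + (2:ℕ), β} : Finset (ZMod l)) ⊆ Sl s l h4 h13 x := by
    intro z hz
    simp only [mem_insert, mem_singleton] at hz
    rcases hz with rfl | rfl | rfl <;> assumption
  have heq := Finset.eq_of_subset_of_card_le hsub
    (by rw [hcard, triple_card l h4 β])
  apply Sl_not_consec s l h4 h13 x hx
  refine ⟨β, ?_⟩
  rw [← heq]
  ext z
  simp only [mem_insert, mem_singleton]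
  push_cast
  tauto

lemma pair_eq (a b : Fin (s + 3)) (ha : (a : ℕ) < l) (hb : (b : ℕ) < l)
    (h : Sl s l h4 h13 a = Sl s l h4 h13 b) : a = b := by
  set α := (((a : ℕ)) : ZMod l) with hα
  set β := (((b : ℕ)) : ZMod l) with hβ
  have key : α = β := by
    have m1 : β + ((1:ℕ) : ZMod l) ∈ Sl s l h4 h13 a := by
      rw [h, mem_Sl_pair s l h4 h13 hb]; left; rfl
    have m2 : β + ((2:ℕ) : ZMod l) ∈ Sl s l h4 h13 a := by
      rw [h, mem_Sl_pair s l h4 h13 hb]; right; rfl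
    rw [mem_Sl_pair s l h4 h13 ha] at m1 m2
    rcases m1 with m1 | m1
    · exact (add_right_cancel m1).symm
    · rcases m2 with m2 | m2
      · -- β + 2 = α + 1 and β + 1 = α + 2
        exfalso
        have e1 : α + ((2:ℕ) : ZMod l) + ((1:ℕ) : ZMod l) = α + ((3:ℕ) : ZMod l) := by
          push_cast; ring
        have e2 : α + ((3:ℕ) : ZMod l) = α + ((1:ℕ) : ZMod l) := by
          rw [← e1, ← m1]
          have : β + ((1:ℕ) : ZMod l) + ((1:ℕ) : ZMod l) = β + ((2:ℕ) : ZMod l) := by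
            push_cast; ring
          rw [this, m2]
        have := add_natCast_inj l h4 α 3 1 (by omega) (by omega) e2
        omega
      · -- β + 1 = α + 2, β + 2 = α + 2
        exfalso
        have : β + ((1:ℕ) : ZMod l) = β + ((2:ℕ) : ZMod l) := by rw [m1, ← m2]
        have := add_natCast_inj l h4 β 1 2 (by omega) (by omega) this
        omega
  have hval : (a : ℕ) = (b : ℕ) := by
    have hv := congrArg ZMod.val key
    haveI : NeZero l := ⟨by omega⟩
    rw [hα, hβ] at hv
    rwa [ZMod.val_natCast_of_lt ha, ZMod.val_natCast_of_lt hb] at hv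
  exact Fin.ext hval

lemma Sl_eq_imp (a b : Fin (s + 3)) (h : Sl s l h4 h13 a = Sl s l h4 h13 b) : a = b := by
  by_cases ha : (a : ℕ) < l <;> by_cases hb : (b : ℕ) < l
  · exact pair_eq s l h4 h13 a b ha hb h
  · exfalso
    have c1 := Sl_card_of_lt s l h4 h13 a ha
    have c2 := Sl_card_of_not_lt s l h4 h13 b hb
    rw [h, c2] at c1; omega
  · exfalso
    have c1 := Sl_card_of_not_lt s l h4 h13 a ha
    have c2 := Sl_card_of_lt s l h4 h13 b hb
    rw [h, c2] at c1; omega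
  · exact Sl_inj_of_not_lt s l h4 h13 a b ha hb h

/-- The central combinatorial fact about intersections of ownership sets. -/
lemma inter_bound (a b : Fin (s + 3)) (hab : a ≠ b) :
    (Sw s l h4 hlw h13 a ∩ Sw s l h4 hlw h13 b).card ≤ 2 ∧
    ((Sw s l h4 hlw h13 a ∩ Sw s l h4 hlw h13 b).card = 2 →
      b ∉ Sw s l h4 hlw h13 a ∧ a ∉ Sw s l h4 hlw h13 b) ∧
    ((Sw s l h4 hlw h13 a ∩ Sw s l h4 hlw h13 b).card = 1 →
      b ∉ Sw s l h4 hlw h13 a ∨ a ∉ Sw s l h4 hlw h13 b) := by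
  set O := Sw s l h4 hlw h13 a ∩ Sw s l h4 hlw h13 b with hO
  have interA : O ⊆ Sw s l h4 hlw h13 a := inter_subset_left
  have interB : O ⊆ Sw s l h4 hlw h13 b := inter_subset_right
  by_cases ha : (a : ℕ) < l <;> by_cases hb : (b : ℕ) < l
  · -- both in L
    have ca : (Sw s l h4 hlw h13 a).card = 2 := by
      rw [Sw_card]; exact Sl_card_of_lt s l h4 h13 a ha
    have cb : (Sw s l h4 hlw h13 b).card = 2 := by
      rw [Sw_card]; exact Sl_card_of_lt s l h4 h13 b hb
    have hle : O.card ≤ 2 := le_trans (card_le_card interA) (le_of_eq ca)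
    refine ⟨hle, ?_, ?_⟩
    · intro h2
      exfalso
      have e1 := Finset.eq_of_subset_of_card_le interA (by omega)
      have e2 := Finset.eq_of_subset_of_card_le interB (by omega)
      have : Sl s l h4 h13 a = Sl s l h4 h13 b := by
        apply Finset.Subset.antisymm
        · exact Sw_subset_imp s l h4 hlw h13 (by rw [← e1, ← e2])
        · exact Sw_subset_imp s l h4 hlw h13 (by rw [← e1, ← e2])
      exact hab (Sl_eq_imp s l h4 h13 a b this)
    · intro h1
      by_contra hcon
      push_neg at hcon
      obtain ⟨hba, hab'⟩ := hcon
      -- b ∈ Sw a and a ∈ Sw b, both in L : contradiction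
      have hβa : (((b : ℕ)) : ZMod l) ∈ Sl s l h4 h13 a :=
        (mem_Sw_iff_lt s l h4 hlw h13 hb).1 hba
      have hαb : (((a : ℕ)) : ZMod l) ∈ Sl s l h4 h13 b :=
        (mem_Sw_iff_lt s l h4 hlw h13 ha).1 hab'
      rw [mem_Sl_pair s l h4 h13 ha] at hβa
      rw [mem_Sl_pair s l h4 h13 hb] at hαb
      obtain ⟨σ', hσ'⟩ := Finset.card_eq_one.1 h1
      have hσO : σ' ∈ O := by rw [hσ']; exact mem_singleton_self σ'
      have hσl : (σ' : ℕ) < l := mem_Sw_lt s l h4 hlw h13 (interA hσO)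
      have hγa : (((σ' : ℕ)) : ZMod l) ∈ Sl s l h4 h13 a :=
        (mem_Sw_iff_lt s l h4 hlw h13 hσl).1 (interA hσO)
      have hγb : (((σ' : ℕ)) : ZMod l) ∈ Sl s l h4 h13 b :=
        (mem_Sw_iff_lt s l h4 hlw h13 hσl).1 (interB hσO)
      rw [mem_Sl_pair s l h4 h13 ha] at hγa
      rw [mem_Sl_pair s l h4 h13 hb] at hγb
      set α := (((a : ℕ)) : ZMod l)
      set β := (((b : ℕ)) : ZMod l)
      set γ := (((σ' : ℕ)) : ZMod l)
      -- derive l = 4 or direct contradiction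
      rcases hβa with hi | hi <;> rcases hαb with hj | hj
      · -- β = α+1, α = β+1
        have : α + ((2:ℕ) : ZMod l) = α := by
          rw [show ((2:ℕ) : ZMod l) = ((1:ℕ):ZMod l) + ((1:ℕ):ZMod l) by push_cast; ring,
            ← add_assoc, ← hi, ← hj]
        exact add_natCast_ne_self l h4 α 2 (by omega) (by omega) this
      · -- β = α+1, α = β+2
        have : α + ((3:ℕ) : ZMod l) = α := by
          rw [show ((3:ℕ) : ZMod l) = ((1:ℕ):ZMod l) + ((2:ℕ):ZMod l) by push_cast; ring,
            ← add_assoc, ← hi, ← hj]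
        exact add_natCast_ne_self l h4 α 3 (by omega) (by omega) this
      · -- β = α+2, α = β+1
        have : α + ((3:ℕ) : ZMod l) = α := by
          rw [show ((3:ℕ) : ZMod l) = ((2:ℕ):ZMod l) + ((1:ℕ):ZMod l) by push_cast; ring,
            ← add_assoc, ← hi, ← hj]
        exact add_natCast_ne_self l h4 α 3 (by omega) (by omega) this
      · -- β = α+2, α = β+2 : forces l = 4
        have h40 : α + ((4:ℕ) : ZMod l) = α := by
          rw [show ((4:ℕ) : ZMod l) = ((2:ℕ):ZMod l) + ((2:ℕ):ZMod l) by push_cast; ring,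
            ← add_assoc, ← hi, ← hj]
        have hz : ((4:ℕ) : ZMod l) = 0 := by
          have := h40
          rwa [add_comm, add_eq_right] at this
        have hdvd : l ∣ 4 := by
          haveI : NeZero l := ⟨by omega⟩
          exact (ZMod.natCast_eq_zero_iff 4 l).1 hz
        have hl4 : l = 4 := by
          have := Nat.le_of_dvd (by norm_num) hdvd
          omega
        subst hl4
        have key : ∀ α' β' γ' : ZMod 4, β' = α' + ((2:ℕ) : ZMod 4) →
            (γ' = α' + ((1:ℕ) : ZMod 4) ∨ γ' = α' + ((2:ℕ) : ZMod 4)) →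
            (γ' = β' + ((1:ℕ) : ZMod 4) ∨ γ' = β' + ((2:ℕ) : ZMod 4)) → False := by decide
        exact key α β γ hi hγa hγb
  · -- a ∈ L, b ∉ L
    have ca : (Sw s l h4 hlw h13 a).card = 2 := by
      rw [Sw_card]; exact Sl_card_of_lt s l h4 h13 a ha
    have hle : O.card ≤ 2 := le_trans (card_le_card interA) (le_of_eq ca)
    have hbnot : b ∉ Sw s l h4 hlw h13 a := by
      intro hc; exact hb (mem_Sw_lt s l h4 hlw h13 hc)
    refine ⟨hle, ?_, fun _ => Or.inl hbnot⟩
    intro h2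
    refine ⟨hbnot, ?_⟩
    intro hac
    have hαb : (((a : ℕ)) : ZMod l) ∈ Sl s l h4 h13 b :=
      (mem_Sw_iff_lt s l h4 hlw h13 ha).1 hac
    have e1 := Finset.eq_of_subset_of_card_le interA (by omega)
    have hsub : Sl s l h4 h13 a ⊆ Sl s l h4 h13 b :=
      Sw_subset_imp s l h4 hlw h13 (by rw [← e1]; exact interB)
    have m1 : (((a : ℕ)) : ZMod l) + ((1:ℕ):ZMod l) ∈ Sl s l h4 h13 b := by
      apply hsub; rw [mem_Sl_pair s l h4 h13 ha]; left; rfl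
    have m2 : (((a : ℕ)) : ZMod l) + ((2:ℕ):ZMod l) ∈ Sl s l h4 h13 b := by
      apply hsub; rw [mem_Sl_pair s l h4 h13 ha]; right; rfl
    exact consec_contra s l h4 h13 b hb _ hαb m1 m2
  · -- a ∉ L, b ∈ L
    have cb : (Sw s l h4 hlw h13 b).card = 2 := by
      rw [Sw_card]; exact Sl_card_of_lt s l h4 h13 b hb
    have hle : O.card ≤ 2 := le_trans (card_le_card interB) (le_of_eq cb)
    have hanot : a ∉ Sw s l h4 hlw h13 b := by
      intro hc; exact ha (mem_Sw_lt s l h4 hlw h13 hc)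
    refine ⟨hle, ?_, fun _ => Or.inr hanot⟩
    intro h2
    refine ⟨?_, hanot⟩
    intro hbc
    have hβa : (((b : ℕ)) : ZMod l) ∈ Sl s l h4 h13 a :=
      (mem_Sw_iff_lt s l h4 hlw h13 hb).1 hbc
    have e1 := Finset.eq_of_subset_of_card_le interB (by omega)
    have hsub : Sl s l h4 h13 b ⊆ Sl s l h4 h13 a :=
      Sw_subset_imp s l h4 hlw h13 (by rw [← e1]; exact interA)
    have m1 : (((b : ℕ)) : ZMod l) + ((1:ℕ):ZMod l) ∈ Sl s l h4 h13 a := by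
      apply hsub; rw [mem_Sl_pair s l h4 h13 hb]; left; rfl
    have m2 : (((b : ℕ)) : ZMod l) + ((2:ℕ):ZMod l) ∈ Sl s l h4 h13 a := by
      apply hsub; rw [mem_Sl_pair s l h4 h13 hb]; right; rfl
    exact consec_contra s l h4 h13 a ha _ hβa m1 m2
  · -- both ∉ L
    have hbnot : b ∉ Sw s l h4 hlw h13 a := by
      intro hc; exact hb (mem_Sw_lt s l h4 hlw h13 hc)
    have hanot : a ∉ Sw s l h4 hlw h13 b := by
      intro hc; exact ha (mem_Sw_lt s l h4 hlw h13 hc)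
    have ca : (Sw s l h4 hlw h13 a).card = 3 := by
      rw [Sw_card]; exact Sl_card_of_not_lt s l h4 h13 a ha
    have hle : O.card ≤ 2 := by
      by_contra hc
      push_neg at hc
      have e1 := Finset.eq_of_subset_of_card_le interA (by omega)
      have hsubAB : Sl s l h4 h13 a ⊆ Sl s l h4 h13 b :=
        Sw_subset_imp s l h4 hlw h13 (by rw [← e1]; exact interB)
      have : Sl s l h4 h13 a = Sl s l h4 h13 b := by
        apply Finset.eq_of_subset_of_card_le hsubAB
        rw [Sl_card_of_not_lt s l h4 h13 a ha, Sl_card_of_not_lt s l h4 h13 b hb]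
      exact hab (Sl_eq_imp s l h4 h13 a b this)
    exact ⟨hle, fun _ => ⟨hbnot, hanot⟩, fun _ => Or.inl hbnot⟩

-- ============ Part 4 : the edge set ============

noncomputable def targets (a : Fin (s + 3)) : Finset (Fin (s + 3)) :=
  univ \ insert a (Sw s l h4 hlw h13 a)

lemma mem_targets {y a : Fin (s + 3)} :
    y ∈ targets s l h4 hlw h13 a ↔ y ≠ a ∧ y ∉ Sw s l h4 hlw h13 a := by
  rw [targets, mem_sdiff, mem_insert]
  constructor
  · rintro ⟨-, h⟩; push_neg at h; exact h
  · rintro ⟨h1, h2⟩; refine ⟨mem_univ _, ?_⟩; push_neg; exact ⟨h1, h2⟩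

lemma self_not_mem_Sw (a : Fin (s + 3)) : a ∉ Sw s l h4 hlw h13 a := by
  intro h; exact ne_of_mem_Sw s l h4 hlw h13 h rfl

lemma targets_card (a : Fin (s + 3)) :
    (targets s l h4 hlw h13 a).card + ((Sw s l h4 hlw h13 a).card + 1) = s + 3 := by
  have hsub := Finset.card_le_univ (insert a (Sw s l h4 hlw h13 a))
  rw [card_insert_of_notMem (self_not_mem_Sw s l h4 hlw h13 a),
    Fintype.card_fin] at hsub
  rw [targets, card_sdiff_of_subset (subset_univ _), card_univ, Fintype.card_fin,
    card_insert_of_notMem (self_not_mem_Sw s l h4 hlw h13 a)]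
  omega

noncomputable def EE : Finset (Fin (s + 3) × Fin (s + 3)) :=
  univ.biUnion (fun a => (targets s l h4 hlw h13 a).image (fun y => (a, y)))

lemma mem_EE {p : Fin (s + 3) × Fin (s + 3)} :
    p ∈ EE s l h4 hlw h13 ↔ p.2 ≠ p.1 ∧ p.2 ∉ Sw s l h4 hlw h13 p.1 := by
  rw [EE, mem_biUnion]
  constructor
  · rintro ⟨a, -, him⟩
    obtain ⟨y, hy, rfl⟩ := mem_image.1 him
    exact (mem_targets s l h4 hlw h13).1 hy
  · rintro ⟨h1, h2⟩
    refine ⟨p.1, mem_univ _, mem_image.2 ⟨p.2, ?_, rfl⟩⟩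
    exact (mem_targets s l h4 hlw h13).2 ⟨h1, h2⟩

lemma cardL (h4' : 4 ≤ l) (hlw' : l ≤ s + 3) :
    (univ.filter (fun x : Fin (s + 3) => (x : ℕ) < l)).card = l := by
  haveI : NeZero l := ⟨by omega⟩
  have himg : univ.filter (fun x : Fin (s + 3) => (x : ℕ) < l) =
      (univ : Finset (ZMod l)).image (toW s l h4' hlw') := by
    ext x
    simp only [mem_filter, mem_univ, true_and, mem_image]
    constructor
    · intro hx
      exact ⟨((x : ℕ) : ZMod l), toW_natCast_val s l h4' hlw' x hx⟩
    · rintro ⟨z, rfl⟩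
      exact toW_lt s l h4' hlw' z
  rw [himg, card_image_of_injective _ (toW_inj s l h4' hlw'), card_univ, ZMod.card]

lemma arith_E (hs : 1 ≤ s) (hlw' : l ≤ s + 3) :
    l * s + (s + 3 - l) * (s - 1) ≤ (s + 3) * (s - 1) + l := by
  obtain ⟨s', rfl⟩ : ∃ s', s = s' + 1 := ⟨s - 1, by omega⟩
  obtain ⟨m, hm⟩ : ∃ m, s' + 1 + 3 = l + m := ⟨s' + 1 + 3 - l, by omega⟩
  rw [show s' + 1 + 3 - l = m from by omega, show s' + 1 - 1 = s' from by omega, hm]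
  exact le_of_eq (by ring)

lemma EE_card_le (hs : 1 ≤ s) :
    (EE s l h4 hlw h13).card ≤ (s + 3) * (s - 1) + l := by
  have hsum : (EE s l h4 hlw h13).card = ∑ a : Fin (s + 3), (targets s l h4 hlw h13 a).card := by
    rw [EE, card_biUnion]
    · exact sum_congr rfl fun a _ => card_image_of_injective _
        (fun x y h => (Prod.ext_iff.1 h).2)
    · intro x _ y _ hxy
      rw [Function.onFun, disjoint_left]
      intro p hpx hpy
      obtain ⟨u, -, hu⟩ := mem_image.1 hpx
      obtain ⟨v, -, hv⟩ := mem_image.1 hpy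
      apply hxy
      rw [← hu] at hv
      exact (Prod.ext_iff.1 hv).1.symm
  have hpt : ∀ a : Fin (s + 3), (targets s l h4 hlw h13 a).card =
      if (a : ℕ) < l then s else s - 1 := by
    intro a
    have ht := targets_card s l h4 hlw h13 a
    by_cases ha : (a : ℕ) < l
    · rw [if_pos ha]
      rw [Sw_card s l h4 hlw h13 a, Sl_card_of_lt s l h4 h13 a ha] at ht
      omega
    · rw [if_neg ha]
      rw [Sw_card s l h4 hlw h13 a, Sl_card_of_not_lt s l h4 h13 a ha] at ht
      omega
  rw [hsum, sum_congr rfl (fun a _ => hpt a), sum_ite, sum_const, sum_const,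
    cardL s l h4 hlw, smul_eq_mul, smul_eq_mul]
  have hcards : (univ.filter (fun a : Fin (s + 3) => ¬ (a : ℕ) < l)).card = s + 3 - l := by
    have := Finset.card_filter_add_card_filter_not
      (s := (univ : Finset (Fin (s + 3)))) (p := fun a : Fin (s + 3) => (a : ℕ) < l)
    rw [cardL s l h4 hlw, card_univ, Fintype.card_fin] at this
    omega
  rw [hcards]
  exact arith_E s l hs hlw

-- ============ Part 5 : third-symbol assignment ============

noncomputable def thrd (p : Fin (s + 3) × Fin (s + 3)) : Option (Fin (s + 3)) :=
  if h2 : (Sw s l h4 hlw h13 p.1 ∩ Sw s l h4 hlw h13 p.2).card = 2 then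
    some (if p.1 < p.2 then
        (Sw s l h4 hlw h13 p.1 ∩ Sw s l h4 hlw h13 p.2).min' (card_pos.1 (by omega))
      else (Sw s l h4 hlw h13 p.1 ∩ Sw s l h4 hlw h13 p.2).max' (card_pos.1 (by omega)))
  else if h1 : (Sw s l h4 hlw h13 p.1 ∩ Sw s l h4 hlw h13 p.2).card = 1 ∧
      (p.1 ∈ Sw s l h4 hlw h13 p.2 ∨ p.1 < p.2) then
    some ((Sw s l h4 hlw h13 p.1 ∩ Sw s l h4 hlw h13 p.2).min' (card_pos.1 (by omega)))
  else none

lemma thrd_mem {p : Fin (s + 3) × Fin (s + 3)} {σ : Fin (s + 3)}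
    (h : thrd s l h4 hlw h13 p = some σ) :
    σ ∈ Sw s l h4 hlw h13 p.1 ∧ σ ∈ Sw s l h4 hlw h13 p.2 := by
  rw [thrd] at h
  split_ifs at h
  all_goals
    first
      | (exact absurd h (Option.noConfusion))
      | (have he := Option.some.inj h
         rw [← he]
         first
           | (have hm := Finset.min'_mem (Sw s l h4 hlw h13 p.1 ∩ Sw s l h4 hlw h13 p.2)
                (card_pos.1 (by omega))
              exact ⟨(mem_inter.1 hm).1, (mem_inter.1 hm).2⟩)
           | (have hm := Finset.max'_mem (Sw s l h4 hlw h13 p.1 ∩ Sw s l h4 hlw h13 p.2)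
                (card_pos.1 (by omega))
              exact ⟨(mem_inter.1 hm).1, (mem_inter.1 hm).2⟩))
      | exact absurd h (by simp)

lemma thrd_ne {p : Fin (s + 3) × Fin (s + 3)} {σ : Fin (s + 3)}
    (h : thrd s l h4 hlw h13 p = some σ) : σ ≠ p.1 ∧ σ ≠ p.2 := by
  obtain ⟨ha, hb⟩ := thrd_mem s l h4 hlw h13 h
  exact ⟨ne_of_mem_Sw s l h4 hlw h13 ha, ne_of_mem_Sw s l h4 hlw h13 hb⟩

lemma eq_min_or_max {O : Finset (Fin (s + 3))} (h2 : O.card = 2) (hne : O.Nonempty)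
    {σ : Fin (s + 3)} (hσ : σ ∈ O) : σ = O.min' hne ∨ σ = O.max' hne := by
  by_contra hcon
  push_neg at hcon
  obtain ⟨hm, hM⟩ := hcon
  have h1 : O.min' hne ∈ O := Finset.min'_mem _ _
  have h1' : O.max' hne ∈ O := Finset.max'_mem _ _
  have hlt : O.min' hne < O.max' hne := Finset.min'_lt_max'_of_card _ (by omega)
  have hsub : ({σ, O.min' hne, O.max' hne} : Finset (Fin (s + 3))) ⊆ O := by
    intro z hz
    simp only [mem_insert, mem_singleton] at hz
    rcases hz with rfl | rfl | rfl <;> assumption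
  have hcard : ({σ, O.min' hne, O.max' hne} : Finset (Fin (s + 3))).card = 3 := by
    rw [card_insert_of_notMem, card_insert_of_notMem, card_singleton]
    · simp only [mem_singleton]
      exact ne_of_lt hlt
    · simp only [mem_insert, mem_singleton]
      push_neg
      exact ⟨hm, hM⟩
  have := Finset.card_le_card hsub
  omega

lemma min'_swap {A B : Finset (Fin (s + 3))} (h : A = B) (hA : A.Nonempty)
    (hB : B.Nonempty) : A.min' hA = B.min' hB := by
  apply le_antisymm
  · exact Finset.min'_le A _ (by rw [h]; exact B.min'_mem hB)
  · exact Finset.min'_le B _ (by rw [← h]; exact A.min'_mem hA)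

lemma max'_swap {A B : Finset (Fin (s + 3))} (h : A = B) (hA : A.Nonempty)
    (hB : B.Nonempty) : A.max' hA = B.max' hB := by
  apply le_antisymm
  · exact Finset.le_max' B _ (by rw [← h]; exact A.max'_mem hA)
  · exact Finset.le_max' A _ (by rw [h]; exact B.max'_mem hB)

lemma exists_third (σ a b : Fin (s + 3)) (hab : a ≠ b)
    (ha : σ ∈ Sw s l h4 hlw h13 a) (hb : σ ∈ Sw s l h4 hlw h13 b) :
    ∃ p : Fin (s + 3) × Fin (s + 3), p ∈ EE s l h4 hlw h13 ∧
      ((p.1 = a ∧ p.2 = b) ∨ (p.1 = b ∧ p.2 = a)) ∧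
      thrd s l h4 hlw h13 p = some σ := by
  have hσO : σ ∈ Sw s l h4 hlw h13 a ∩ Sw s l h4 hlw h13 b := mem_inter.2 ⟨ha, hb⟩
  have hσO' : σ ∈ Sw s l h4 hlw h13 b ∩ Sw s l h4 hlw h13 a := mem_inter.2 ⟨hb, ha⟩
  have hOcomm : Sw s l h4 hlw h13 b ∩ Sw s l h4 hlw h13 a =
      Sw s l h4 hlw h13 a ∩ Sw s l h4 hlw h13 b := inter_comm _ _
  obtain ⟨hle2, h2imp, h1imp⟩ := inter_bound s l h4 hlw h13 a b hab
  have h1le : 1 ≤ (Sw s l h4 hlw h13 a ∩ Sw s l h4 hlw h13 b).card :=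
    card_pos.2 ⟨σ, hσO⟩
  have hne : (Sw s l h4 hlw h13 a ∩ Sw s l h4 hlw h13 b).Nonempty := ⟨σ, hσO⟩
  have hne' : (Sw s l h4 hlw h13 b ∩ Sw s l h4 hlw h13 a).Nonempty := ⟨σ, hσO'⟩
  have hcase : (Sw s l h4 hlw h13 a ∩ Sw s l h4 hlw h13 b).card = 1 ∨
      (Sw s l h4 hlw h13 a ∩ Sw s l h4 hlw h13 b).card = 2 := by omega
  rcases hcase with hc1 | hc2
  · -- exactly one common owner
    have hc1' : (Sw s l h4 hlw h13 b ∩ Sw s l h4 hlw h13 a).card = 1 := by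
      rw [hOcomm]; exact hc1
    have hmin : (Sw s l h4 hlw h13 a ∩ Sw s l h4 hlw h13 b).min' hne = σ :=
      Finset.card_le_one.1 (le_of_eq hc1) _ (Finset.min'_mem _ hne) _ hσO
    have hmin' : (Sw s l h4 hlw h13 b ∩ Sw s l h4 hlw h13 a).min' hne' = σ :=
      Finset.card_le_one.1 (le_of_eq hc1') _ (Finset.min'_mem _ hne') _ hσO'
    by_cases hA : b ∈ Sw s l h4 hlw h13 a <;> by_cases hB : a ∈ Sw s l h4 hlw h13 b
    · rcases h1imp hc1 with h | h <;> contradiction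
    · refine ⟨(b, a), (mem_EE s l h4 hlw h13).2 ⟨hab, hB⟩, Or.inr ⟨rfl, rfl⟩, ?_⟩
      rw [thrd]
      dsimp only
      rw [dif_neg (by omega), dif_pos ⟨hc1', Or.inl hA⟩]
      exact congrArg some hmin'
    · refine ⟨(a, b), (mem_EE s l h4 hlw h13).2 ⟨Ne.symm hab, hA⟩, Or.inl ⟨rfl, rfl⟩, ?_⟩
      rw [thrd]
      dsimp only
      rw [dif_neg (by omega), dif_pos ⟨hc1, Or.inl hB⟩]
      exact congrArg some hmin
    · rcases hab.lt_or_gt with hlt | hlt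
      · refine ⟨(a, b), (mem_EE s l h4 hlw h13).2 ⟨Ne.symm hab, hA⟩, Or.inl ⟨rfl, rfl⟩, ?_⟩
        rw [thrd]
        dsimp only
        rw [dif_neg (by omega), dif_pos ⟨hc1, Or.inr hlt⟩]
        exact congrArg some hmin
      · refine ⟨(b, a), (mem_EE s l h4 hlw h13).2 ⟨hab, hB⟩, Or.inr ⟨rfl, rfl⟩, ?_⟩
        rw [thrd]
        dsimp only
        rw [dif_neg (by omega), dif_pos ⟨hc1', Or.inr hlt⟩]
        exact congrArg some hmin'
  · -- two common owners : both directions are valid edges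
    obtain ⟨hA, hB⟩ := h2imp hc2
    have hc2' : (Sw s l h4 hlw h13 b ∩ Sw s l h4 hlw h13 a).card = 2 := by
      rw [hOcomm]; exact hc2
    rcases eq_min_or_max s hc2 hne hσO with hσm | hσm <;>
      rcases hab.lt_or_gt with hlt | hlt
    · refine ⟨(a, b), (mem_EE s l h4 hlw h13).2 ⟨Ne.symm hab, hA⟩, Or.inl ⟨rfl, rfl⟩, ?_⟩
      rw [thrd]
      dsimp only
      rw [dif_pos hc2, if_pos hlt]
      exact congrArg some hσm.symm
    · refine ⟨(b, a), (mem_EE s l h4 hlw h13).2 ⟨hab, hB⟩, Or.inr ⟨rfl, rfl⟩, ?_⟩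
      rw [thrd]
      dsimp only
      rw [dif_pos hc2', if_pos hlt]
      have := min'_swap s hOcomm hne' hne
      rw [this]
      exact congrArg some hσm.symm
    · refine ⟨(b, a), (mem_EE s l h4 hlw h13).2 ⟨hab, hB⟩, Or.inr ⟨rfl, rfl⟩, ?_⟩
      rw [thrd]
      dsimp only
      rw [dif_pos hc2', if_neg (not_lt.2 (le_of_lt hlt))]
      have := max'_swap s hOcomm hne' hne
      rw [this]
      exact congrArg some hσm.symm
    · refine ⟨(a, b), (mem_EE s l h4 hlw h13).2 ⟨Ne.symm hab, hA⟩, Or.inl ⟨rfl, rfl⟩, ?_⟩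
      rw [thrd]
      dsimp only
      rw [dif_pos hc2, if_neg (not_lt.2 (le_of_lt hlt))]
      exact congrArg some hσm.symm

-- ============ Part 6 : rows ============

def rp2 (a b : Fin (s + 3)) : Equiv.Perm (Fin (s + 3)) :=
  (Equiv.swap 1 ((Equiv.swap 0 a).symm b)).trans (Equiv.swap 0 a)

def rowPerm (a b : Fin (s + 3)) (o : Option (Fin (s + 3))) : Equiv.Perm (Fin (s + 3)) :=
  match o with
  | none => rp2 s a b
  | some c => (Equiv.swap 2 ((rp2 s a b).symm c)).trans (rp2 s a b)

lemma fin_val0 : ((0 : Fin (s + 3)) : ℕ) = 0 := rfl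
lemma fin_val1 : ((1 : Fin (s + 3)) : ℕ) = 1 := by
  show 1 % (s + 3) = 1
  exact Nat.mod_eq_of_lt (by omega)
lemma fin_val2 : ((2 : Fin (s + 3)) : ℕ) = 2 := by
  show 2 % (s + 3) = 2
  exact Nat.mod_eq_of_lt (by omega)

lemma fin01 : (0 : Fin (s + 3)) ≠ 1 := by
  intro h
  have := congrArg Fin.val h
  rw [fin_val0, fin_val1] at this
  omega

lemma fin02 : (0 : Fin (s + 3)) ≠ 2 := by
  intro h
  have := congrArg Fin.val h
  rw [fin_val0, fin_val2] at this
  omega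

lemma fin12 : (1 : Fin (s + 3)) ≠ 2 := by
  intro h
  have := congrArg Fin.val h
  rw [fin_val1, fin_val2] at this
  omega

lemma rp2_zero (a b : Fin (s + 3)) (hba : b ≠ a) : rp2 s a b 0 = a := by
  rw [rp2, Equiv.trans_apply]
  have h1 : (Equiv.swap 0 a).symm b ≠ 0 := by
    intro h
    apply hba
    have := (Equiv.symm_apply_eq (Equiv.swap 0 a)).1 h
    rwa [Equiv.swap_apply_left] at this
  rw [Equiv.swap_apply_of_ne_of_ne (fin01 s) (Ne.symm h1), Equiv.swap_apply_left]

lemma rp2_one (a b : Fin (s + 3)) : rp2 s a b 1 = b := by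
  rw [rp2, Equiv.trans_apply, Equiv.swap_apply_left, Equiv.apply_symm_apply]

lemma rowPerm_zero (a b : Fin (s + 3)) (o : Option (Fin (s + 3))) (hba : b ≠ a)
    (ho : ∀ c, o = some c → c ≠ a ∧ c ≠ b) : rowPerm s a b o 0 = a := by
  match o with
  | none => exact rp2_zero s a b hba
  | some c =>
    obtain ⟨hca, hcb⟩ := ho c rfl
    show (Equiv.swap 2 ((rp2 s a b).symm c)).trans (rp2 s a b) 0 = a
    rw [Equiv.trans_apply]
    have h1 : (rp2 s a b).symm c ≠ 0 := by
      intro h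
      apply hca
      have := (Equiv.symm_apply_eq (rp2 s a b)).1 h
      rwa [rp2_zero s a b hba] at this
    rw [Equiv.swap_apply_of_ne_of_ne (fin02 s) (Ne.symm h1), rp2_zero s a b hba]

lemma rowPerm_one (a b : Fin (s + 3)) (o : Option (Fin (s + 3))) (hba : b ≠ a)
    (ho : ∀ c, o = some c → c ≠ a ∧ c ≠ b) : rowPerm s a b o 1 = b := by
  match o with
  | none => exact rp2_one s a b
  | some c =>
    obtain ⟨hca, hcb⟩ := ho c rfl
    show (Equiv.swap 2 ((rp2 s a b).symm c)).trans (rp2 s a b) 1 = b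
    rw [Equiv.trans_apply]
    have h1 : (rp2 s a b).symm c ≠ 1 := by
      intro h
      apply hcb
      have := (Equiv.symm_apply_eq (rp2 s a b)).1 h
      rwa [rp2_one s a b] at this
    rw [Equiv.swap_apply_of_ne_of_ne (fin12 s) (Ne.symm h1), rp2_one s a b]

lemma rowPerm_two (a b c : Fin (s + 3)) : rowPerm s a b (some c) 2 = c := by
  show (Equiv.swap 2 ((rp2 s a b).symm c)).trans (rp2 s a b) 2 = c
  rw [Equiv.trans_apply, Equiv.swap_apply_left, Equiv.apply_symm_apply]

lemma rowPerm_symm_a (a b : Fin (s + 3)) (o : Option (Fin (s + 3))) (hba : b ≠ a)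
    (ho : ∀ c, o = some c → c ≠ a ∧ c ≠ b) : (rowPerm s a b o).symm a = 0 := by
  rw [Equiv.symm_apply_eq]
  exact (rowPerm_zero s a b o hba ho).symm

lemma rowPerm_symm_b (a b : Fin (s + 3)) (o : Option (Fin (s + 3))) (hba : b ≠ a)
    (ho : ∀ c, o = some c → c ≠ a ∧ c ≠ b) : (rowPerm s a b o).symm b = 1 := by
  rw [Equiv.symm_apply_eq]
  exact (rowPerm_one s a b o hba ho).symm

lemma rowPerm_symm_c (a b c : Fin (s + 3)) : (rowPerm s a b (some c)).symm c = 2 := by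
  rw [Equiv.symm_apply_eq]
  exact (rowPerm_two s a b c).symm

-- ============ Part 7 : the array ============

noncomputable def Cfun : Fin ((s + 3) * (s - 1) + l) → Equiv.Perm (Fin (s + 3)) := fun i =>
  if h : (i : ℕ) < (EE s l h4 hlw h13).card then
    rowPerm s (((EE s l h4 hlw h13).equivFin.symm ⟨(i : ℕ), h⟩ : _)).val.1
      (((EE s l h4 hlw h13).equivFin.symm ⟨(i : ℕ), h⟩ : _)).val.2
      (thrd s l h4 hlw h13 (((EE s l h4 hlw h13).equivFin.symm ⟨(i : ℕ), h⟩ : _)).val)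
  else 1

noncomputable def eIdx (hs : 1 ≤ s) (p : Fin (s + 3) × Fin (s + 3)) :
    Fin ((s + 3) * (s - 1) + l) :=
  if hp : p ∈ EE s l h4 hlw h13 then
    ⟨((EE s l h4 hlw h13).equivFin ⟨p, hp⟩ : Fin _), by
      have hlt := ((EE s l h4 hlw h13).equivFin ⟨p, hp⟩).isLt
      have hle := EE_card_le s l h4 hlw h13 hs
      omega⟩
  else ⟨0, by have := h4; omega⟩

lemma Cfun_eIdx (hs : 1 ≤ s) {p : Fin (s + 3) × Fin (s + 3)} (hp : p ∈ EE s l h4 hlw h13) :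
    Cfun s l h4 hlw h13 (eIdx s l h4 hlw h13 hs p) =
      rowPerm s p.1 p.2 (thrd s l h4 hlw h13 p) := by
  rw [eIdx, dif_pos hp]
  simp only [Cfun]
  have hlt : (((EE s l h4 hlw h13).equivFin ⟨p, hp⟩ : Fin _) : ℕ) <
      (EE s l h4 hlw h13).card := ((EE s l h4 hlw h13).equivFin ⟨p, hp⟩).isLt
  rw [dif_pos hlt]
  have hfin : (⟨(((EE s l h4 hlw h13).equivFin ⟨p, hp⟩ : Fin _) : ℕ), hlt⟩ :
      Fin (EE s l h4 hlw h13).card) = (EE s l h4 hlw h13).equivFin ⟨p, hp⟩ :=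
    Fin.ext rfl
  rw [hfin, Equiv.symm_apply_apply]

lemma eIdx_inj (hs : 1 ≤ s) {p q : Fin (s + 3) × Fin (s + 3)}
    (hp : p ∈ EE s l h4 hlw h13) (hq : q ∈ EE s l h4 hlw h13)
    (h : eIdx s l h4 hlw h13 hs p = eIdx s l h4 hlw h13 hs q) : p = q := by
  rw [eIdx, dif_pos hp, eIdx, dif_pos hq] at h
  have hval := congrArg Fin.val h
  have h2 : (EE s l h4 hlw h13).equivFin ⟨p, hp⟩ = (EE s l h4 hlw h13).equivFin ⟨q, hq⟩ :=
    Fin.ext hval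
  have h3 := (EE s l h4 hlw h13).equivFin.injective h2
  exact congrArg Subtype.val h3

-- ============ Part 8 : the main count ============

lemma targets_card_val (a : Fin (s + 3)) :
    (targets s l h4 hlw h13 a).card = if (a : ℕ) < l then s else s - 1 := by
  have ht := targets_card s l h4 hlw h13 a
  by_cases ha : (a : ℕ) < l
  · rw [if_pos ha]
    rw [Sw_card s l h4 hlw h13 a, Sl_card_of_lt s l h4 h13 a ha] at ht
    omega
  · rw [if_neg ha]
    rw [Sw_card s l h4 hlw h13 a, Sl_card_of_not_lt s l h4 h13 a ha] at ht
    omega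

lemma choose2_ge (q : ℕ) : q - 1 ≤ q.choose 2 := by
  cases q with
  | zero => simp
  | succ m =>
    rw [Nat.choose_succ_succ]
    have : m.choose 1 = m := Nat.choose_one_right m
    omega

lemma main_count (hs : 1 ≤ s) (σ : Fin (s + 3)) (T : Finset (Fin (s + 3))) (hσT : σ ∉ T) :
    2 * s + 1 - T.card ≤ (Finset.univ.filter fun i : Fin ((s + 3) * (s - 1) + l) =>
      ∀ τ ∈ T, (Cfun s l h4 hlw h13 i).symm σ < (Cfun s l h4 hlw h13 i).symm τ).card := by
  classical
  set U : Finset (Fin (s + 3)) := (univ.erase σ) \ T with hU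
  set Wu : Finset (Fin (s + 3)) := U.filter (fun x => σ ∈ Sw s l h4 hlw h13 x) with hWu
  -- basic facts about U
  have hTsub : T ⊆ univ.erase σ := by
    intro τ hτ
    rw [mem_erase]
    exact ⟨fun h => hσT (h ▸ hτ), mem_univ τ⟩
  have hUcard : U.card = (s + 2) - T.card := by
    rw [hU, card_sdiff_of_subset hTsub, card_erase_of_mem (mem_univ σ), card_univ, Fintype.card_fin]
    omega
  have hk3 : T.card ≤ s + 2 := by
    have := card_le_card hTsub
    rw [card_erase_of_mem (mem_univ σ), card_univ, Fintype.card_fin] at this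
    omega
  have hUσ : ∀ x ∈ U, x ≠ σ ∧ x ∉ T := by
    intro x hx
    rw [hU, mem_sdiff, mem_erase] at hx
    exact ⟨hx.1.1, hx.2⟩
  -- the three families of good rows
  set I1 : Finset (Fin ((s + 3) * (s - 1) + l)) :=
    (targets s l h4 hlw h13 σ).image (fun y => eIdx s l h4 hlw h13 hs (σ, y)) with hI1
  set I2 : Finset (Fin ((s + 3) * (s - 1) + l)) :=
    (U \ Wu).image (fun x => eIdx s l h4 hlw h13 hs (x, σ)) with hI2
  have hexP : ∀ P ∈ Wu.powersetCard 2, ∃ p : Fin (s + 3) × Fin (s + 3),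
      p ∈ EE s l h4 hlw h13 ∧ ({p.1, p.2} : Finset (Fin (s + 3))) = P ∧
      thrd s l h4 hlw h13 p = some σ := by
    intro P hP
    obtain ⟨hPsub, hPcard⟩ := mem_powersetCard.1 hP
    obtain ⟨a, b, hab, rfl⟩ := card_eq_two.1 hPcard
    have ha' : a ∈ Wu := hPsub (by simp)
    have hb' : b ∈ Wu := hPsub (by simp)
    have hσa : σ ∈ Sw s l h4 hlw h13 a := (mem_filter.1 ha').2
    have hσb : σ ∈ Sw s l h4 hlw h13 b := (mem_filter.1 hb').2
    obtain ⟨p, hpE, hdir, hthrd⟩ := exists_third s l h4 hlw h13 σ a b hab hσa hσb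
    refine ⟨p, hpE, ?_, hthrd⟩
    rcases hdir with ⟨hd1, hd2⟩ | ⟨hd1, hd2⟩ <;> rw [hd1, hd2]
    exact Finset.pair_comm b a
  choose f hf1 hf2 hf3 using hexP
  set I3 : Finset (Fin ((s + 3) * (s - 1) + l)) :=
    (Wu.powersetCard 2).attach.image
      (fun P => eIdx s l h4 hlw h13 hs (f P.1 P.2)) with hI3
  -- edges used are valid
  have hE1 : ∀ y ∈ targets s l h4 hlw h13 σ, (σ, y) ∈ EE s l h4 hlw h13 := by
    intro y hy
    obtain ⟨hy1, hy2⟩ := (mem_targets s l h4 hlw h13).1 hy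
    exact (mem_EE s l h4 hlw h13).2 ⟨hy1, hy2⟩
  have hE2 : ∀ x ∈ U \ Wu, (x, σ) ∈ EE s l h4 hlw h13 := by
    intro x hx
    rw [mem_sdiff] at hx
    have hxU := hx.1
    have hσSw : σ ∉ Sw s l h4 hlw h13 x := by
      intro hc
      exact hx.2 (mem_filter.2 ⟨hxU, hc⟩)
    exact (mem_EE s l h4 hlw h13).2 ⟨Ne.symm (hUσ x hxU).1, hσSw⟩
  -- positions of σ in the three families
  have pos1 : ∀ i ∈ I1, (Cfun s l h4 hlw h13 i).symm σ = 0 := by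
    intro i hi
    obtain ⟨y, hy, rfl⟩ := mem_image.1 hi
    rw [Cfun_eIdx s l h4 hlw h13 hs (hE1 y hy)]
    obtain ⟨hy1, hy2⟩ := (mem_targets s l h4 hlw h13).1 hy
    exact rowPerm_symm_a s σ y _ hy1 (fun c hc => thrd_ne s l h4 hlw h13 hc)
  have pos2 : ∀ i ∈ I2, (Cfun s l h4 hlw h13 i).symm σ = 1 := by
    intro i hi
    obtain ⟨x, hx, rfl⟩ := mem_image.1 hi
    rw [Cfun_eIdx s l h4 hlw h13 hs (hE2 x hx)]
    have hxs : σ ≠ x := Ne.symm (hUσ x (mem_sdiff.1 hx).1).1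
    exact rowPerm_symm_b s x σ _ hxs (fun c hc => thrd_ne s l h4 hlw h13 hc)
  have pos3 : ∀ i ∈ I3, (Cfun s l h4 hlw h13 i).symm σ = 2 := by
    intro i hi
    obtain ⟨P, hP, rfl⟩ := mem_image.1 hi
    rw [Cfun_eIdx s l h4 hlw h13 hs (hf1 P.1 P.2)]
    rw [hf3 P.1 P.2]
    exact rowPerm_symm_c s _ _ σ
  -- goodness of the three families
  have hgood : ∀ i ∈ I1 ∪ I2 ∪ I3,
      ∀ τ ∈ T, (Cfun s l h4 hlw h13 i).symm σ < (Cfun s l h4 hlw h13 i).symm τ := by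
    intro i hi τ hτ
    have hτσ : τ ≠ σ := fun h => hσT (h ▸ hτ)
    rw [mem_union, mem_union] at hi
    rcases hi with (hi | hi) | hi
    · -- σ first
      obtain ⟨y, hy, rfl⟩ := mem_image.1 hi
      have hC := Cfun_eIdx s l h4 hlw h13 hs (hE1 y hy)
      have h0 := pos1 _ (mem_image.2 ⟨y, hy, rfl⟩)
      rw [h0]
      apply Fin.pos_of_ne_zero
      intro hc
      rw [← h0] at hc
      exact hτσ ((Cfun s l h4 hlw h13 _).symm.injective hc)
    · -- σ second
      obtain ⟨x, hx, rfl⟩ := mem_image.1 hi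
      have hC := Cfun_eIdx s l h4 hlw h13 hs (hE2 x hx)
      have h1 := pos2 _ (mem_image.2 ⟨x, hx, rfl⟩)
      rw [h1]
      have hxU := (mem_sdiff.1 hx).1
      have hxs : σ ≠ x := Ne.symm (hUσ x hxU).1
      have hτx : τ ≠ x := by
        intro hc
        exact (hUσ x hxU).2 (hc ▸ hτ)
      have hne0 : (Cfun s l h4 hlw h13 (eIdx s l h4 hlw h13 hs (x, σ))).symm τ ≠ 0 := by
        intro hc
        apply hτx
        apply (Cfun s l h4 hlw h13 _).symm.injective
        rw [hc, hC]
        exact (rowPerm_symm_a s x σ _ hxs (fun c hcc => thrd_ne s l h4 hlw h13 hcc)).symm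
      have hne1 : (Cfun s l h4 hlw h13 (eIdx s l h4 hlw h13 hs (x, σ))).symm τ ≠ 1 := by
        intro hc
        rw [← h1] at hc
        exact hτσ ((Cfun s l h4 hlw h13 _).symm.injective hc)
      rw [Fin.lt_def, fin_val1]
      have hv0 : ((Cfun s l h4 hlw h13 (eIdx s l h4 hlw h13 hs (x, σ))).symm τ : ℕ) ≠ 0 := by
        intro hc; exact hne0 (Fin.ext (by rw [hc, fin_val0]))
      have hv1 : ((Cfun s l h4 hlw h13 (eIdx s l h4 hlw h13 hs (x, σ))).symm τ : ℕ) ≠ 1 := by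
        intro hc; exact hne1 (Fin.ext (by rw [hc, fin_val1]))
      omega
    · -- σ third
      obtain ⟨P, hP, rfl⟩ := mem_image.1 hi
      have hC := Cfun_eIdx s l h4 hlw h13 hs (hf1 P.1 P.2)
      have h2 := pos3 _ (mem_image.2 ⟨P, hP, rfl⟩)
      rw [h2]
      -- p.1 and p.2 lie in P.1 ⊆ Wu ⊆ U
      have hPsub : ({(f P.1 P.2).1, (f P.1 P.2).2} : Finset (Fin (s + 3))) = P.1 :=
        hf2 P.1 P.2
      have hPU : (P.1 : Finset (Fin (s + 3))) ⊆ U := by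
        have := (mem_powersetCard.1 P.2).1
        intro z hz
        exact (mem_filter.1 (this hz)).1
      have hp1U : (f P.1 P.2).1 ∈ U := by
        apply hPU
        have hm : (f P.1 P.2).1 ∈ ({(f P.1 P.2).1, (f P.1 P.2).2} : Finset (Fin (s + 3))) := by
          simp
        rwa [hPsub] at hm
      have hp2U : (f P.1 P.2).2 ∈ U := by
        apply hPU
        have hm : (f P.1 P.2).2 ∈ ({(f P.1 P.2).1, (f P.1 P.2).2} : Finset (Fin (s + 3))) := by
          simp
        rwa [hPsub] at hm
      have hτp1 : τ ≠ (f P.1 P.2).1 := by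
        intro hc
        exact (hUσ _ hp1U).2 (hc ▸ hτ)
      have hτp2 : τ ≠ (f P.1 P.2).2 := by
        intro hc
        exact (hUσ _ hp2U).2 (hc ▸ hτ)
      have hba : (f P.1 P.2).2 ≠ (f P.1 P.2).1 :=
        ((mem_EE s l h4 hlw h13).1 (hf1 P.1 P.2)).1
      have hsymm_a : (Cfun s l h4 hlw h13 (eIdx s l h4 hlw h13 hs (f P.1 P.2))).symm
          (f P.1 P.2).1 = 0 := by
        rw [hC]
        exact rowPerm_symm_a s _ _ _ hba (fun c hcc => thrd_ne s l h4 hlw h13 hcc)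
      have hsymm_b : (Cfun s l h4 hlw h13 (eIdx s l h4 hlw h13 hs (f P.1 P.2))).symm
          (f P.1 P.2).2 = 1 := by
        rw [hC]
        exact rowPerm_symm_b s _ _ _ hba (fun c hcc => thrd_ne s l h4 hlw h13 hcc)
      have hv0 : ((Cfun s l h4 hlw h13 (eIdx s l h4 hlw h13 hs (f P.1 P.2))).symm τ : ℕ) ≠ 0 := by
        intro hc
        apply hτp1
        apply (Cfun s l h4 hlw h13 _).symm.injective
        rw [hsymm_a]
        exact Fin.ext (by rw [hc, fin_val0])
      have hv1 : ((Cfun s l h4 hlw h13 (eIdx s l h4 hlw h13 hs (f P.1 P.2))).symm τ : ℕ) ≠ 1 := by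
        intro hc
        apply hτp2
        apply (Cfun s l h4 hlw h13 _).symm.injective
        rw [hsymm_b]
        exact Fin.ext (by rw [hc, fin_val1])
      have hv2 : ((Cfun s l h4 hlw h13 (eIdx s l h4 hlw h13 hs (f P.1 P.2))).symm τ : ℕ) ≠ 2 := by
        intro hc
        apply hτσ
        apply (Cfun s l h4 hlw h13 _).symm.injective
        rw [h2]
        exact Fin.ext (by rw [hc, fin_val2])
      rw [Fin.lt_def, fin_val2]
      omega
  -- cardinalities
  have card1 : I1.card = (targets s l h4 hlw h13 σ).card := by
    rw [hI1]
    apply card_image_of_injOn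
    intro y hy y' hy' he
    have := eIdx_inj s l h4 hlw h13 hs (hE1 y hy) (hE1 y' hy') he
    exact (Prod.ext_iff.1 this).2
  have card2 : I2.card = (U \ Wu).card := by
    rw [hI2]
    apply card_image_of_injOn
    intro x hx x' hx' he
    have := eIdx_inj s l h4 hlw h13 hs (hE2 x hx) (hE2 x' hx') he
    exact (Prod.ext_iff.1 this).1
  have card3 : I3.card = Wu.card.choose 2 := by
    rw [hI3]
    rw [card_image_of_injOn, Finset.card_attach, Finset.card_powersetCard]
    · intro P hP Q hQ he
      have heq := eIdx_inj s l h4 hlw h13 hs (hf1 P.1 P.2) (hf1 Q.1 Q.2) he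
      apply Subtype.ext
      rw [← hf2 P.1 P.2, ← hf2 Q.1 Q.2, heq]
  -- disjointness
  have d12 : Disjoint I1 I2 := by
    rw [disjoint_left]
    intro i h1 h2
    have := pos1 i h1
    rw [pos2 i h2] at this
    exact fin01 s this.symm
  have d13 : Disjoint (I1 ∪ I2) I3 := by
    rw [disjoint_left]
    intro i h1 h3
    rw [mem_union] at h1
    rcases h1 with h1 | h1
    · have := pos1 i h1
      rw [pos3 i h3] at this
      exact fin02 s this.symm
    · have := pos2 i h1
      rw [pos3 i h3] at this
      exact fin12 s this.symm
  -- put it together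
  have hsubset : I1 ∪ I2 ∪ I3 ⊆ (Finset.univ.filter fun i : Fin ((s + 3) * (s - 1) + l) =>
      ∀ τ ∈ T, (Cfun s l h4 hlw h13 i).symm σ < (Cfun s l h4 hlw h13 i).symm τ) := by
    intro i hi
    rw [mem_filter]
    exact ⟨mem_univ i, hgood i hi⟩
  have hcard_union : (I1 ∪ I2 ∪ I3).card = I1.card + I2.card + I3.card := by
    rw [card_union_of_disjoint d13, card_union_of_disjoint d12]
  have hfinal := card_le_card hsubset
  rw [hcard_union, card1, card2, card3] at hfinal
  -- arithmetic
  have hWuU : Wu ⊆ U := filter_subset _ _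
  have hWuCard : Wu.card ≤ U.card := card_le_card hWuU
  have hsd : (U \ Wu).card = U.card - Wu.card := card_sdiff_of_subset hWuU
  have hch := choose2_ge Wu.card
  have htc := targets_card_val s l h4 hlw h13 σ
  by_cases hσl : (σ : ℕ) < l
  · rw [if_pos hσl] at htc
    rw [htc, hsd] at hfinal
    omega
  · rw [if_neg hσl] at htc
    have hWuEmpty : Wu.card = 0 := by
      rw [card_eq_zero]
      rw [hWu]
      rw [filter_eq_empty_iff]
      intro x hx hc
      exact hσl (mem_Sw_lt s l h4 hlw h13 hc)
    rw [htc, hsd, hWuEmpty] at hfinal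
    simp only [Nat.choose] at hfinal
    omega

end SC8

theorem stmt8 (s l : ℕ) (hs : 1 ≤ s) (hl : 0 < l)
    (h1 : s + 3 ≤ Nat.choose l 3) (h2 : l ≤ s + 3) :
    SuitableCoreExists ((s + 3) * (s - 1) + l) (s + 3) (2 * s + 1) := by
  have hl4 : 4 ≤ l := by
    by_contra hcon
    push_neg at hcon
    have hle : Nat.choose l 3 ≤ Nat.choose 3 3 := Nat.choose_le_choose 3 (by omega)
    have : Nat.choose 3 3 = 1 := by decide
    omega
  refine ⟨SC8.Cfun s l hl4 h2 h1, ?_⟩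
  intro σ T hσT hTcard
  exact SC8.main_count s l hl4 h2 h1 hs σ T hσT
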